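/- Let G be a totally ordered graph, let x₀x₁ be an edge of G of height r, and let t be a positive integer with C(t,2) < r (where C(t,2) = t(t−1)/2). Then G contains a monotone path x₀x₁…x_t of length t, starting with the edge x₀x₁, whose height is at least r − C(t,2). -/

import Mathlib

open scoped Classical

namespace AltitudePaper

variable {V : Type*} [Fintype V]

/-- The list of cells `(i, u)` (row `i`, column `u`), rows `1..N`, in the order
they are filled: by row, then by the vertex (column) order. -/
noncomputable def cellList (ov : LinearOrder V) (N : ℕ) : List (ℕ × V) :=
  letI := ov
  (List.range N).flatMap fun i => ((Finset.univ : Finset V).sort (· ≤ ·)).map fun u => (i + 1, u)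

/-- The largest (in the edge order `oe`) edge of `G` incident to `u` not among `used`. -/
noncomputable def pick (G : SimpleGraph V) (oe : LinearOrder (Sym2 V)) (u : V)
    (used : Finset (Sym2 V)) : Option (Sym2 V) :=
  letI := oe
  ((Finset.univ : Finset (Sym2 V)).filter fun e => e ∈ G.edgeSet ∧ u ∈ e ∧ e ∉ used).max

/-- Fill the given list of cells in order, greedily placing at each cell `(i,u)` the
largest unused edge incident to `u`. -/
noncomputable def tableAux (G : SimpleGraph V) (oe : LinearOrder (Sym2 V)) :
    List (ℕ × V) → Finset (Sym2 V) → (ℕ × V) → Option (Sym2 V)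
  | [], _, _ => none
  | c :: rest, used, β =>
    match pick G oe c.2 used with
    | none => if β = c then none else tableAux G oe rest used β
    | some e => if β = c then some e else tableAux G oe rest (insert e used) β

/-- The height table of the totally ordered graph `(G, ov, oe)`:  cells `(i,u)` with
`i` a positive integer (row) and `u` a vertex (column) are filled in order (by row,
then by column order), each cell receiving the largest edge incident to its column
not appearing in an earlier cell (and left empty if there is none). -/
noncomputable def heightTable (G : SimpleGraph V) (ov : LinearOrder V)
    (oe : LinearOrder (Sym2 V)) : ℕ × V → Option (Sym2 V) :=
  tableAux G oe (cellList ov (Fintype.card (Sym2 V))) ∅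

/-- The height `h_G(e)` of an edge `e`: the index of the row of the height table
containing `e`. -/
noncomputable def edgeHeight (G : SimpleGraph V) (ov : LinearOrder V)
    (oe : LinearOrder (Sym2 V)) (e : Sym2 V) : ℕ :=
  sSup {i | ∃ u, heightTable G ov oe (i, u) = some e}

/-- A monotone path in the edge-ordered graph `(G, oe)`: a path traversing its
edges in increasing order of the edge ordering. -/
def IsMonotonePath (G : SimpleGraph V) (oe : LinearOrder (Sym2 V)) {u v : V}
    (p : G.Walk u v) : Prop :=
  p.IsPath ∧ List.Chain' (fun e f => oe.lt e f) p.edges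

/-- The height of a (nontrivial) monotone path: the height of its last edge. -/
noncomputable def pathHeight (G : SimpleGraph V) (ov : LinearOrder V)
    (oe : LinearOrder (Sym2 V)) {u v : V} (p : G.Walk u v) : ℕ :=
  (p.edges.getLast?.map (edgeHeight G ov oe)).getD 0


/-! ### Auxiliary lemmas -/

section Aux

variable (G : SimpleGraph V) (oe : LinearOrder (Sym2 V))

lemma pick_spec {u : V} {used : Finset (Sym2 V)} {e : Sym2 V}
    (h : pick G oe u used = some e) : e ∈ G.edgeSet ∧ u ∈ e ∧ e ∉ used := by
  letI := oe
  rw [pick] at h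
  have := Finset.mem_of_max h
  simpa using this

lemma pick_le {u : V} {used : Finset (Sym2 V)} {e f : Sym2 V}
    (hf : pick G oe u used = some f)
    (he : e ∈ G.edgeSet) (heu : u ∈ e) (hene : e ∉ used) : oe.le e f := by
  letI := oe
  rw [pick] at hf
  exact Finset.le_max_of_eq (by simp [he, heu, hene]) hf

lemma pick_ne_none {u : V} {used : Finset (Sym2 V)} {e : Sym2 V}
    (he : e ∈ G.edgeSet) (heu : u ∈ e) (hene : e ∉ used) :
    pick G oe u used ≠ none := by
  letI := oe
  rw [pick]
  intro h
  replace h : ((Finset.univ : Finset (Sym2 V)).filter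
      fun e => e ∈ G.edgeSet ∧ u ∈ e ∧ e ∉ used).max = (⊥ : WithBot (Sym2 V)) := h
  rw [Finset.max_eq_bot] at h
  have : e ∈ ((Finset.univ : Finset (Sym2 V)).filter
      fun e => e ∈ G.edgeSet ∧ u ∈ e ∧ e ∉ used) := by simp [he, heu, hene]
  rw [h] at this
  simp at this

lemma tableAux_cons_none {c : ℕ × V} {rest : List (ℕ × V)} {used : Finset (Sym2 V)}
    {β : ℕ × V} (hp : pick G oe c.2 used = none) :
    tableAux G oe (c :: rest) used β =
      if β = c then none else tableAux G oe rest used β := by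
  simp only [tableAux, hp]

lemma tableAux_cons_some {c : ℕ × V} {rest : List (ℕ × V)} {used : Finset (Sym2 V)}
    {β : ℕ × V} {g : Sym2 V} (hp : pick G oe c.2 used = some g) :
    tableAux G oe (c :: rest) used β =
      if β = c then some g else tableAux G oe rest (insert g used) β := by
  simp only [tableAux, hp]

lemma tableAux_spec {L : List (ℕ × V)} {used : Finset (Sym2 V)} {β : ℕ × V} {e : Sym2 V}
    (h : tableAux G oe L used β = some e) :
    e ∈ G.edgeSet ∧ β.2 ∈ e ∧ e ∉ used ∧ β ∈ L := by
  induction L generalizing used with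
  | nil => simp [tableAux] at h
  | cons c rest ih =>
    rcases hp : pick G oe c.2 used with _ | g
    · rw [tableAux_cons_none G oe hp] at h
      by_cases hb : β = c
      · rw [if_pos hb] at h; exact absurd h (by simp)
      · rw [if_neg hb] at h
        obtain ⟨h1, h2, h3, h4⟩ := ih h
        exact ⟨h1, h2, h3, List.mem_cons_of_mem _ h4⟩
    · rw [tableAux_cons_some G oe hp] at h
      by_cases hb : β = c
      · rw [if_pos hb] at h
        obtain ⟨h1, h2, h3⟩ := pick_spec G oe hp
        cases h
        exact ⟨h1, by rw [hb]; exact h2, h3, by rw [hb]; exact List.mem_cons_self⟩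
      · rw [if_neg hb] at h
        obtain ⟨h1, h2, h3, h4⟩ := ih h
        exact ⟨h1, h2, fun hc => h3 (Finset.mem_insert_of_mem hc), List.mem_cons_of_mem _ h4⟩

lemma tableAux_inj {L : List (ℕ × V)} {used : Finset (Sym2 V)} {β γ : ℕ × V} {e : Sym2 V}
    (hβ : tableAux G oe L used β = some e) (hγ : tableAux G oe L used γ = some e) :
    β = γ := by
  induction L generalizing used with
  | nil => simp [tableAux] at hβ
  | cons c rest ih =>
    rcases hp : pick G oe c.2 used with _ | g
    · rw [tableAux_cons_none G oe hp] at hβ hγ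
      by_cases hb : β = c
      · rw [if_pos hb] at hβ; exact absurd hβ (by simp)
      · by_cases hg : γ = c
        · rw [if_pos hg] at hγ; exact absurd hγ (by simp)
        · rw [if_neg hb] at hβ; rw [if_neg hg] at hγ; exact ih hβ hγ
    · rw [tableAux_cons_some G oe hp] at hβ hγ
      by_cases hb : β = c <;> by_cases hg : γ = c
      · rw [hb, hg]
      · rw [if_pos hb] at hβ; rw [if_neg hg] at hγ
        cases hβ
        have := (tableAux_spec G oe hγ).2.2.1
        exact absurd (Finset.mem_insert_self _ _) this
      · rw [if_neg hb] at hβ; rw [if_pos hg] at hγ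
        cases hγ
        have := (tableAux_spec G oe hβ).2.2.1
        exact absurd (Finset.mem_insert_self _ _) this
      · rw [if_neg hb] at hβ; rw [if_neg hg] at hγ; exact ih hβ hγ

lemma tableAux_before {γ : ℕ × V} {e : Sym2 V} (hu : γ.2 ∈ e) :
    ∀ (L₁ : List (ℕ × V)) {L₂ : List (ℕ × V)} {used : Finset (Sym2 V)} {β : ℕ × V},
    (L₁ ++ γ :: L₂).Nodup → β ∈ L₂ →
    tableAux G oe (L₁ ++ γ :: L₂) used β = some e →
    ∃ f, tableAux G oe (L₁ ++ γ :: L₂) used γ = some f ∧ oe.lt e f := by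
  letI := oe
  intro L₁
  induction L₁ with
  | nil =>
    intro L₂ used β hnd hβ hβe
    simp only [List.nil_append] at *
    have hβγ : β ≠ γ := by
      rintro rfl
      exact (List.nodup_cons.mp hnd).1 hβ
    rcases hp : pick G oe γ.2 used with _ | g
    · rw [tableAux_cons_none G oe hp, if_neg hβγ] at hβe
      obtain ⟨h1, _, h3, _⟩ := tableAux_spec G oe hβe
      exact absurd hp (pick_ne_none G oe h1 hu h3)
    · rw [tableAux_cons_some G oe hp, if_neg hβγ] at hβe
      obtain ⟨h1, _, h3, _⟩ := tableAux_spec G oe hβe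
      refine ⟨g, by rw [tableAux_cons_some G oe hp, if_pos rfl], ?_⟩
      have hle : oe.le e g := pick_le G oe hp h1 hu (fun hc => h3 (Finset.mem_insert_of_mem hc))
      have hne : e ≠ g := by rintro rfl; exact h3 (Finset.mem_insert_self _ _)
      exact @lt_of_le_of_ne _ oe.toPartialOrder _ _ hle hne
  | cons c L₁' ih =>
    intro L₂ used β hnd hβ hβe
    rw [List.cons_append] at hnd hβe ⊢
    have hcrest : c ∉ L₁' ++ γ :: L₂ := (List.nodup_cons.mp hnd).1
    have hβc : β ≠ c := by rintro rfl; exact hcrest (by simp [hβ])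
    have hγc : γ ≠ c := by rintro rfl; exact hcrest (by simp)
    have hnd' : (L₁' ++ γ :: L₂).Nodup := (List.nodup_cons.mp hnd).2
    rcases hp : pick G oe c.2 used with _ | g
    · rw [tableAux_cons_none G oe hp, if_neg hβc] at hβe
      obtain ⟨f, hf, hlt⟩ := ih hnd' hβ hβe
      exact ⟨f, by rw [tableAux_cons_none G oe hp, if_neg hγc]; exact hf, hlt⟩
    · rw [tableAux_cons_some G oe hp, if_neg hβc] at hβe
      obtain ⟨f, hf, hlt⟩ := ih hnd' hβ hβe
      exact ⟨f, by rw [tableAux_cons_some G oe hp, if_neg hγc]; exact hf, hlt⟩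

lemma mem_cellList {N : ℕ} {i : ℕ} {u : V} {ov : LinearOrder V} :
    (i, u) ∈ cellList ov N ↔ 1 ≤ i ∧ i ≤ N := by
  letI := ov
  simp only [cellList, List.mem_flatMap, List.mem_map, List.mem_range, Prod.mk.injEq]
  constructor
  · rintro ⟨j, hj, v, _, rfl, rfl⟩
    omega
  · rintro ⟨h1, h2⟩
    exact ⟨i - 1, by omega, u, by simp [Finset.mem_sort], by omega, rfl⟩

lemma cellList_nodup (ov : LinearOrder V) (N : ℕ) : (cellList ov N).Nodup := by
  letI := ov
  rw [cellList, List.nodup_flatMap]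
  refine ⟨fun j _ => ?_, ?_⟩
  · refine List.Nodup.map ?_ ((Finset.univ : Finset V).sort_nodup (· ≤ ·))
    intro u v h
    simpa using h
  · refine List.Pairwise.imp ?_ List.pairwise_lt_range
    intro a b hab
    intro x hxa hxb
    simp only [List.mem_map] at hxa hxb
    obtain ⟨u, _, rfl⟩ := hxa
    obtain ⟨v, _, hv⟩ := hxb
    have : b + 1 = a + 1 := (Prod.mk.injEq _ _ _ _).mp hv |>.1
    omega

lemma cellList_split (ov : LinearOrder V) {N i j : ℕ} (u w : V)
    (h1 : 1 ≤ i) (hij : i < j) (hjN : j ≤ N) :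
    ∃ L₁ L₂, cellList ov N = L₁ ++ (i, u) :: L₂ ∧ (j, w) ∈ L₂ := by
  letI := ov
  have hiN : i ≤ N := by omega
  have hsplit : cellList ov N =
      ((List.range N).take i).flatMap
        (fun k => ((Finset.univ : Finset V).sort (· ≤ ·)).map fun v => (k + 1, v)) ++
      ((List.range N).drop i).flatMap
        (fun k => ((Finset.univ : Finset V).sort (· ≤ ·)).map fun v => (k + 1, v)) := by
    rw [cellList, ← List.flatMap_append, List.take_append_drop]
  have hmem1 : (i, u) ∈ ((List.range N).take i).flatMap
      (fun k => ((Finset.univ : Finset V).sort (· ≤ ·)).map fun v => (k + 1, v)) := by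
    rw [List.take_range, min_eq_left hiN]
    simp only [List.mem_flatMap, List.mem_map, List.mem_range]
    exact ⟨i - 1, by omega, u, by simp [Finset.mem_sort], by simp; omega⟩
  have hmem2 : (j, w) ∈ ((List.range N).drop i).flatMap
      (fun k => ((Finset.univ : Finset V).sort (· ≤ ·)).map fun v => (k + 1, v)) := by
    simp only [List.mem_flatMap, List.mem_map]
    refine ⟨j - 1, ?_, w, by simp [Finset.mem_sort], by simp; omega⟩
    have hlen : j - 1 - i < ((List.range N).drop i).length := by
      simp only [List.length_drop, List.length_range]; omega
    have h3 : ((List.range N).drop i)[j - 1 - i] = j - 1 := by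
      simp only [List.getElem_drop, List.getElem_range]; omega
    rw [← h3]
    exact List.getElem_mem _
  obtain ⟨A₁, A₂, hA⟩ := List.append_of_mem hmem1
  refine ⟨A₁, A₂ ++ ((List.range N).drop i).flatMap
      (fun k => ((Finset.univ : Finset V).sort (· ≤ ·)).map fun v => (k + 1, v)),
    ?_, by simp [hmem2]⟩
  rw [hsplit, hA]
  simp


variable (ov : LinearOrder V)

lemma heightTable_spec {i : ℕ} {u : V} {e : Sym2 V}
    (h : heightTable G ov oe (i, u) = some e) :
    e ∈ G.edgeSet ∧ u ∈ e ∧ 1 ≤ i ∧ i ≤ Fintype.card (Sym2 V) := by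
  have h' : tableAux G oe (cellList ov (Fintype.card (Sym2 V))) ∅ (i, u) = some e := h
  obtain ⟨h1, h2, _, h4⟩ := tableAux_spec G oe h'
  exact ⟨h1, h2, (mem_cellList.mp h4).1, (mem_cellList.mp h4).2⟩

lemma edgeHeight_of_heightTable {i : ℕ} {u : V} {e : Sym2 V}
    (h : heightTable G ov oe (i, u) = some e) :
    edgeHeight G ov oe e = i := by
  have hset : {j | ∃ v, heightTable G ov oe (j, v) = some e} = {i} := by
    ext j
    simp only [Set.mem_setOf_eq, Set.mem_singleton_iff]
    constructor
    · rintro ⟨v, hv⟩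
      have h1 : tableAux G oe (cellList ov (Fintype.card (Sym2 V))) ∅ (j, v) = some e := hv
      have h2 : tableAux G oe (cellList ov (Fintype.card (Sym2 V))) ∅ (i, u) = some e := h
      have := tableAux_inj G oe h1 h2
      exact congrArg Prod.fst this
    · rintro rfl; exact ⟨u, h⟩
  rw [edgeHeight, hset, csSup_singleton]

lemma exists_heightTable_row {e : Sym2 V} {r : ℕ}
    (h : edgeHeight G ov oe e = r) (hr : 1 ≤ r) :
    ∃ w, heightTable G ov oe (r, w) = some e := by
  set S := {j | ∃ v, heightTable G ov oe (j, v) = some e} with hS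
  have hbdd : BddAbove S := by
    refine ⟨Fintype.card (Sym2 V), ?_⟩
    rintro j ⟨v, hv⟩
    exact (heightTable_spec G oe ov hv).2.2.2
  have hne : S.Nonempty := by
    by_contra hcon
    rw [Set.not_nonempty_iff_eq_empty] at hcon
    rw [edgeHeight, ← hS, hcon] at h
    rw [csSup_empty] at h
    simp at h
    omega
  have hmem := Nat.sSup_mem hne hbdd
  have : sSup S = r := h
  rw [this] at hmem
  exact hmem

lemma exists_higher {h : ℕ} {w : V} {e : Sym2 V}
    (hpl : heightTable G ov oe (h, w) = some e)
    {u : V} (hu : u ∈ e) {i : ℕ} (h1 : 1 ≤ i) (h2 : i < h) :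
    ∃ f, heightTable G ov oe (i, u) = some f ∧ oe.lt e f := by
  have hN : h ≤ Fintype.card (Sym2 V) := (heightTable_spec G oe ov hpl).2.2.2
  obtain ⟨L₁, L₂, hL, hmem⟩ := cellList_split ov u w h1 h2 hN
  have hβe : tableAux G oe (L₁ ++ (i, u) :: L₂) ∅ (h, w) = some e := by
    rw [← hL]; exact hpl
  have hnd : (L₁ ++ (i, u) :: L₂).Nodup := hL ▸ cellList_nodup ov _
  obtain ⟨f, hf, hlt⟩ := tableAux_before G oe hu L₁ hnd hmem hβe
  refine ⟨f, ?_, hlt⟩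
  show tableAux G oe (cellList ov (Fintype.card (Sym2 V))) ∅ (i, u) = some f
  rw [hL]; exact hf

lemma start_mem_edges_head? {G : SimpleGraph V} {u v : V} (p : G.Walk u v) {e : Sym2 V}
    (h : p.edges.head? = some e) : u ∈ e := by
  cases p with
  | nil => simp at h
  | cons hadj q =>
    rw [SimpleGraph.Walk.edges_cons] at h
    simp only [List.head?_cons, Option.some.injEq] at h
    rw [← h]
    simp

lemma end_mem_edges_getLast? {G : SimpleGraph V} {u v : V} (p : G.Walk u v) {e : Sym2 V}
    (h : p.edges.getLast? = some e) : v ∈ e := by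
  apply start_mem_edges_head? p.reverse
  rw [SimpleGraph.Walk.edges_reverse, List.head?_reverse]
  exact h

end Aux

/-- Lemma 2 of the paper.  If `x₀x₁` is an edge of height `r` in a
totally ordered graph and `t` is a positive integer with `C(t,2) < r`, then `G`
contains a monotone path of length `t` starting with the edge `x₀x₁` whose height is
at least `r - C(t,2)`. -/
theorem monotone_path_from_high_edge {V : Type*} [Fintype V] (G : SimpleGraph V)
    (ov : LinearOrder V) (oe : LinearOrder (Sym2 V)) {x₀ x₁ : V} (hadj : G.Adj x₀ x₁)
    (r t : ℕ) (hr : edgeHeight G ov oe s(x₀, x₁) = r) (ht : 1 ≤ t)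
    (htr : t.choose 2 < r) :
    ∃ (w : V) (p : G.Walk x₀ w),
      IsMonotonePath G oe p ∧ p.length = t ∧ p.edges.head? = some s(x₀, x₁) ∧
        r - t.choose 2 ≤ pathHeight G ov oe p := by
  revert htr
  induction t, ht using Nat.le_induction with
  | base =>
    intro htr
    refine ⟨x₁, SimpleGraph.Walk.cons hadj SimpleGraph.Walk.nil, ⟨?_, ?_⟩, ?_, ?_, ?_⟩
    · simp [SimpleGraph.Walk.cons_isPath_iff, hadj.ne]
    · exact List.isChain_singleton _
    · simp
    · simp
    · simp [pathHeight, hr, Nat.choose]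
  | succ t ht ih =>
    intro htr'
    have hch : (t + 1).choose 2 = t.choose 2 + t := by
      rw [Nat.choose_succ_succ' t 1, Nat.choose_one_right]
      show t + t.choose 2 = _
      omega
    have htr : t.choose 2 < r := by omega
    obtain ⟨w, p, ⟨hpath, hchain⟩, hlen, hhead, hht⟩ := ih htr
    have hedne : p.edges ≠ [] := by
      intro hc
      have h1 := p.length_edges
      rw [hc, hlen] at h1
      simp at h1
      omega
    set e := p.edges.getLast hedne with he
    have hlast? : p.edges.getLast? = some e := List.getLast?_eq_getLast _
    have hpH : pathHeight G ov oe p = edgeHeight G ov oe e := by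
      rw [pathHeight, hlast?]; rfl
    set h := edgeHeight G ov oe e with hh
    have hhr : r - t.choose 2 ≤ h := by rw [hpH] at hht; exact hht
    have hht1 : t + 1 ≤ h := by omega
    have hwe : w ∈ e := end_mem_edges_getLast? p hlast?
    obtain ⟨w', hpl⟩ := exists_heightTable_row G oe ov hh.symm (by omega)
    -- the other endpoint of e
    have heE : e ∈ G.edgeSet := SimpleGraph.Walk.edges_subset_edgeSet p (List.getLast_mem hedne)
    set z := Sym2.Mem.other hwe with hz
    have hze : s(w, z) = e := Sym2.other_spec hwe
    have hwz : G.Adj w z := by rw [← SimpleGraph.mem_edgeSet, hze]; exact heE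
    have hzsup : z ∈ p.support := by
      apply SimpleGraph.Walk.snd_mem_support_of_mem_edges p
      rw [hze]
      exact List.getLast_mem hedne
    -- candidates
    have hcand : ∀ i ∈ Finset.Icc (h - t) (h - 1),
        ∃ f, heightTable G ov oe (i, w) = some f ∧ oe.lt e f := by
      intro i hi
      simp only [Finset.mem_Icc] at hi
      exact exists_higher G oe ov hpl hwe (by omega) (by omega)
    choose F hF1 hF2 using hcand
    have hgood : ∃ y, G.Adj w y ∧ y ∉ p.support ∧ oe.lt e s(w, y) ∧
        h - t ≤ edgeHeight G ov oe s(w, y) := by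
      by_contra hcon
      push_neg at hcon
      have hwF : ∀ i (hi : i ∈ Finset.Icc (h - t) (h - 1)), w ∈ F i hi :=
        fun i hi => (heightTable_spec G oe ov (hF1 i hi)).2.1
      set g : ℕ → V := fun i => if hi : i ∈ Finset.Icc (h - t) (h - 1) then Sym2.Mem.other (hwF i hi) else w with hg
      have hsg : ∀ i (hi : i ∈ Finset.Icc (h - t) (h - 1)), s(w, g i) = F i hi := by
        intro i hi
        simp only [hg, dif_pos hi]
        exact Sym2.other_spec (hwF i hi)
      have hadjg : ∀ i (hi : i ∈ Finset.Icc (h - t) (h - 1)), G.Adj w (g i) := by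
        intro i hi
        rw [← SimpleGraph.mem_edgeSet, hsg i hi]
        exact (heightTable_spec G oe ov (hF1 i hi)).1
      have hheight : ∀ i (hi : i ∈ Finset.Icc (h - t) (h - 1)), edgeHeight G ov oe s(w, g i) = i := by
        intro i hi
        rw [hsg i hi]
        exact edgeHeight_of_heightTable G oe ov (hF1 i hi)
      have hlt : ∀ i (hi : i ∈ Finset.Icc (h - t) (h - 1)), oe.lt e s(w, g i) := by
        intro i hi
        rw [hsg i hi]
        exact hF2 i hi
      have hsup : ∀ i (hi : i ∈ Finset.Icc (h - t) (h - 1)), g i ∈ p.support := by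
        intro i hi
        by_contra hns
        have := hcon (g i) (hadjg i hi) hns (hlt i hi)
        rw [hheight i hi] at this
        have := Finset.mem_Icc.mp hi
        omega
      have hgne : ∀ i (hi : i ∈ Finset.Icc (h - t) (h - 1)), g i ≠ z := by
        intro i hi hc
        have : s(w, g i) = e := by rw [hc, hze]
        have h2 := hlt i hi
        rw [this] at h2
        exact @lt_irrefl _ oe.toPreorder e h2
      have hgnw : ∀ i (hi : i ∈ Finset.Icc (h - t) (h - 1)), g i ≠ w := fun i hi => (hadjg i hi).ne'
      set T := p.support.toFinset \ {w, z} with hT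
      have hmapsto : ∀ i ∈ Finset.Icc (h - t) (h - 1), g i ∈ T := by
        intro i hi
        rw [hT, Finset.mem_sdiff]
        refine ⟨List.mem_toFinset.mpr (hsup i hi), ?_⟩
        simp only [Finset.mem_insert, Finset.mem_singleton]
        push_neg
        exact ⟨hgnw i hi, hgne i hi⟩
      have hinj : Set.InjOn g ↑(Finset.Icc (h - t) (h - 1)) := by
        intro i hi j hj hgij
        rw [Finset.mem_coe] at hi hj
        have h1 := hheight i hi
        have h2 := hheight j hj
        rw [← h1, ← h2, hgij]
      have hcard := Finset.card_le_card_of_injOn g hmapsto hinj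
      have hIcard : (Finset.Icc (h - t) (h - 1)).card = t := by
        rw [Nat.card_Icc]
        omega
      have hsupcard : p.support.toFinset.card = t + 1 := by
        rw [List.toFinset_card_of_nodup hpath.support_nodup,
          SimpleGraph.Walk.length_support, hlen]
      have hwzsub : ({w, z} : Finset V) ⊆ p.support.toFinset := by
        intro a ha
        simp only [Finset.mem_insert, Finset.mem_singleton] at ha
        rcases ha with rfl | rfl
        · exact List.mem_toFinset.mpr p.end_mem_support
        · exact List.mem_toFinset.mpr hzsup
      have hwzcard : ({w, z} : Finset V).card = 2 := by
        rw [Finset.card_insert_of_notMem (by simp [hwz.ne]), Finset.card_singleton]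
      have hTcard : T.card = t - 1 := by
        rw [hT, Finset.card_sdiff_of_subset hwzsub, hsupcard, hwzcard]
        omega
      rw [hIcard, hTcard] at hcard
      omega
    obtain ⟨y, hady, hysup, hylt, hyh⟩ := hgood
    refine ⟨y, p.concat hady, ⟨?_, ?_⟩, ?_, ?_, ?_⟩
    · rw [SimpleGraph.Walk.isPath_def, SimpleGraph.Walk.support_concat,
        List.nodup_append]
      refine ⟨hpath.support_nodup, by simp, ?_⟩
      intro a ha b hb hab
      simp only [List.mem_singleton] at hb
      subst hb
      subst hab
      exact hysup ha
    · rw [SimpleGraph.Walk.edges_concat, List.concat_eq_append]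
      show List.IsChain _ _
      rw [List.isChain_append]
      refine ⟨hchain, by simp, ?_⟩
      intro a ha b hb
      simp only [List.head?_cons, Option.mem_def, Option.some.injEq] at hb
      rw [hlast?] at ha
      simp only [Option.mem_def, Option.some.injEq] at ha
      subst ha; subst hb
      exact hylt
    · rw [SimpleGraph.Walk.length_concat, hlen]
    · rw [SimpleGraph.Walk.edges_concat, List.concat_eq_append]
      rw [List.head?_append_of_ne_nil _ hedne]
      exact hhead
    · rw [pathHeight, SimpleGraph.Walk.edges_concat, List.concat_eq_append,
        List.getLast?_concat]
      simp only [Option.map_some, Option.getD_some]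
      omega


end AltitudePaper
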